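/- For integers 0 ≤ a < b, given a cycle C of length b, there exists a set U of a edges of C such that every arc (path contained in the cycle) A of C satisfies |E(A) ∩ U| ≤ |E(A)|·(a/b) + 1. -/

import Mathlib

/-- For integers `0 ≤ a < b`, given a cycle `C` of length `b`
(vertices `c_1, …, c_b` indexed by `ZMod b`, with the edge `{c_i, c_{i+1}}`
identified with its starting index `i`), there is a set `U` of `a` edges of `C`
such that every arc `A` of `C` (the `L` consecutive edges starting at position `x`,
`L ≤ b`) satisfies `|E(A) ∩ U| ≤ |E(A)| · (a/b) + 1`. -/
theorem stmt_0 (a b : ℕ) (hab : a < b) :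
    ∃ U : Finset (ZMod b), U.card = a ∧
      ∀ (x : ZMod b) (L : ℕ), L ≤ b →
        ((((Finset.range L).filter (fun j : ℕ => x + (j : ZMod b) ∈ U)).card : ℚ)
          ≤ (L : ℚ) * a / b + 1) := by
  haveI : NeZero b := ⟨by omega⟩
  have hb : 0 < b := by omega
  set g : ℕ → ℕ := fun n => n * a / b with hg
  -- periodicity
  have gadd : ∀ m k : ℕ, g (m + b * k) = g m + k * a := by
    intro m k
    have h1 : (m + b * k) * a = m * a + b * (k * a) := by ring
    simp only [hg, h1, Nat.add_mul_div_left _ _ hb]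
  -- step is 0 or 1
  have gstep : ∀ n : ℕ, g (n + 1) = g n ∨ g (n + 1) = g n + 1 := by
    intro n
    have h1 : (n + 1) * a = n * a + a := by ring
    have h2 : g (n + 1) = g n + a / b + if b ≤ n * a % b + a % b then 1 else 0 := by
      simp only [hg, h1, Nat.add_div hb]
    have h3 : a / b = 0 := Nat.div_eq_of_lt hab
    rw [h3] at h2
    split at h2 <;> omega
  -- telescoping count
  have count : ∀ (m L : ℕ),
      ((Finset.range L).filter (fun j => g (m + j + 1) ≠ g (m + j))).card + g m
        = g (m + L) := by
    intro m L
    induction L with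
    | zero => simp
    | succ L ih =>
      rw [Finset.range_add_one, Finset.filter_insert]
      rcases gstep (m + L) with h | h
      · rw [if_neg (by simp [h])]
        rw [← Nat.add_assoc m L 1, h]
        exact ih
      · rw [if_pos (by omega), Finset.card_insert_of_notMem (by simp)]
        rw [← Nat.add_assoc m L 1, h]
        omega
  -- the set U
  refine ⟨Finset.univ.filter (fun i : ZMod b => g (i.val + 1) ≠ g i.val), ?_, ?_⟩
  · -- cardinality
    have hbij : (Finset.univ.filter (fun i : ZMod b => g (i.val + 1) ≠ g i.val)).card
        = ((Finset.range b).filter (fun n => g (n + 1) ≠ g n)).card := by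
      apply Finset.card_nbij' (fun i : ZMod b => i.val) (fun n : ℕ => (n : ZMod b))
      · intro i hi
        simp only [Finset.mem_coe, Finset.mem_filter, Finset.mem_univ, true_and] at hi
        simp [Finset.mem_filter, Finset.mem_range, ZMod.val_lt i, hi]
      · intro n hn
        simp only [Finset.mem_coe, Finset.mem_filter, Finset.mem_range] at hn
        have : (↑n : ZMod b).val = n := by
          rw [ZMod.val_natCast, Nat.mod_eq_of_lt hn.1]
        simp [Finset.mem_filter, this, hn.2]
      · intro i _
        simp [ZMod.natCast_val, ZMod.cast_id]
      · intro n hn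
        simp only [Finset.mem_coe, Finset.mem_filter, Finset.mem_range] at hn
        show (n : ZMod b).val = n
        rw [ZMod.val_natCast, Nat.mod_eq_of_lt hn.1]
    rw [hbij]
    have hc := count 0 b
    simp only [Nat.zero_add] at hc
    have hgb : g b = a := by
      simp only [hg]; exact Nat.mul_div_cancel_left a hb
    have hg0 : g 0 = 0 := by simp [hg]
    omega
  · -- the inequality
    intro x L _
    set m := x.val with hm
    have hmem : ∀ j : ℕ, (x + (j : ZMod b) ∈
        Finset.univ.filter (fun i : ZMod b => g (i.val + 1) ≠ g i.val))
        ↔ g (m + j + 1) ≠ g (m + j) := by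
      intro j
      simp only [Finset.mem_filter, Finset.mem_univ, true_and]
      have hval : (x + (j : ZMod b)).val = (m + j) % b := by
        rw [ZMod.val_add, ZMod.val_natCast]
        conv_rhs => rw [Nat.add_mod]
        rw [Nat.mod_eq_of_lt (ZMod.val_lt x)]
      rw [hval]
      have h1 : g (m + j) = g ((m + j) % b) + ((m + j) / b) * a := by
        conv_lhs => rw [← Nat.mod_add_div (m + j) b]
        exact gadd _ _
      have h2 : g (m + j + 1) = g ((m + j) % b + 1) + ((m + j) / b) * a := by
        conv_lhs => rw [← Nat.mod_add_div (m + j) b]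
        rw [show (m + j) % b + b * ((m + j) / b) + 1
            = ((m + j) % b + 1) + b * ((m + j) / b) by ring]
        exact gadd _ _
      omega
    have hfilter : (Finset.range L).filter (fun j : ℕ =>
          x + (j : ZMod b) ∈ Finset.univ.filter (fun i : ZMod b => g (i.val + 1) ≠ g i.val))
        = (Finset.range L).filter (fun j => g (m + j + 1) ≠ g (m + j)) := by
      apply Finset.filter_congr
      intro j _
      exact hmem j
    rw [hfilter]
    have hcount := count m L
    -- bound g (m + L) ≤ g m + g L + 1
    have hbound : g (m + L) ≤ g m + g L + 1 := by
      have h1 : (m + L) * a = m * a + L * a := by ring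
      have h2 : g (m + L) = g m + g L + if b ≤ m * a % b + L * a % b then 1 else 0 := by
        simp only [hg, h1, Nat.add_div hb]
      split at h2 <;> omega
    have hcard : ((Finset.range L).filter (fun j => g (m + j + 1) ≠ g (m + j))).card
        ≤ g L + 1 := by omega
    have hq : ((g L : ℚ)) ≤ (L : ℚ) * a / b := by
      have := Nat.cast_div_le (α := ℚ) (m := L * a) (n := b)
      simpa [hg, mul_comm] using this
    calc (((Finset.range L).filter (fun j => g (m + j + 1) ≠ g (m + j))).card : ℚ)
        ≤ (g L : ℚ) + 1 := by exact_mod_cast hcard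
      _ ≤ (L : ℚ) * a / b + 1 := by linarith
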